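/- Let n be a positive even integer and z ∈ I^FPF_n. Then MX^Sp_z = {A ∈ Mat^Sp_n : rank(A_{[i][j]}) ≤ rank(z_{[i][j]}) for all (i,j) ∈ Ess(D^Sp(z))}; that is, a skew-symmetric n×n complex matrix A satisfies rank(A_{[i][j]}) ≤ rank(z_{[i][j]}) for all i,j ∈ [n] if and only if it satisfies these inequalities for all (i,j) in the essential set Ess(D^Sp(z)). -/

import Mathlib

open MvPolynomial

noncomputable section

/-- The coefficient ring `ℤ[β]`. -/
abbrev Rb : Type := Polynomial ℤ

/-- The indeterminate `β`. -/
def bb : Rb := Polynomial.X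

/-- The order-reversing permutation `n⋯321`, i.e. `i ↦ n+1-i` in 1-indexed notation. -/
def revPerm (n : ℕ) : Equiv.Perm (Fin n) :=
  ⟨Fin.rev, Fin.rev, fun i => Fin.rev_rev i, fun i => Fin.rev_rev i⟩

/-- `z` is a fixed-point-free involution. -/
def IsFPF {n : ℕ} (z : Equiv.Perm (Fin n)) : Prop :=
  z * z = 1 ∧ ∀ i, z i ≠ i

/-- `x_i + x_j + β x_i x_j`. -/
def oplus {n : ℕ} (i j : Fin n) : MvPolynomial (Fin n) Rb :=
  X i + X j + C bb * (X i * X j)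

/-- `IsDivDiffB i j f g` encodes `∂_i^{(β)} f = g` where `j = i+1`:
`∂_i^{(β)} f = ((1+βx_j) f - s_i((1+βx_j) f)) / (x_i - x_j)`, stated multiplicatively
(the quotient is exact, and `g` is uniquely determined since the ring is a domain). -/
def IsDivDiffB {n : ℕ} (i j : Fin n) (f g : MvPolynomial (Fin n) Rb) : Prop :=
  (X i - X j) * g =
    (1 + C bb * X j) * f - rename ⇑(Equiv.swap i j) ((1 + C bb * X j) * f)

/-- `∏_{1 ≤ i < j ≤ n-i} (x_i + x_j + β x_i x_j)` (variables 0-indexed). -/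
def spTop (n : ℕ) : MvPolynomial (Fin n) Rb :=
  ∏ p ∈ Finset.univ.filter
      (fun p : Fin n × Fin n => p.1 < p.2 ∧ (p.1 : ℕ) + (p.2 : ℕ) + 2 ≤ n),
    oplus p.1 p.2

/-- `x_1^{n-1} x_2^{n-2} ⋯ x_{n-1}^1` (variables 0-indexed). -/
def grTop (n : ℕ) : MvPolynomial (Fin n) Rb :=
  ∏ a : Fin n, X a ^ (n - 1 - (a : ℕ))

/-- The defining property of the family of symplectic Grothendieck polynomials. -/
def IsSpFam (n : ℕ) (G : Equiv.Perm (Fin n) → MvPolynomial (Fin n) Rb) : Prop :=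
  G (revPerm n) = spTop n ∧
    ∀ z : Equiv.Perm (Fin n), IsFPF z →
      ∀ i j : Fin n, (j : ℕ) = (i : ℕ) + 1 →
        z i ≠ j → z j ≠ i → z j < z i →
          IsDivDiffB i j (G z) (G (Equiv.swap i j * z * Equiv.swap i j))

/-- The defining property of the family of Grothendieck polynomials. -/
def IsGrothFam (n : ℕ) (G : Equiv.Perm (Fin n) → MvPolynomial (Fin n) Rb) : Prop :=
  G (revPerm n) = grTop n ∧
    ∀ (w : Equiv.Perm (Fin n)) (i j : Fin n), (j : ℕ) = (i : ℕ) + 1 →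
      w j < w i → IsDivDiffB i j (G w) (G (w * Equiv.swap i j))

/-- The length (number of inversions) of a permutation. -/
def invLen {n : ℕ} (w : Equiv.Perm (Fin n)) : ℕ :=
  (Finset.univ.filter (fun p : Fin n × Fin n => p.1 < p.2 ∧ w p.2 < w p.1)).card

/-- The fixed-point-free involution length `ℓ_fpf(z) = #{(i,j) : z(i) > z(j) < i < j}`. -/
def fpfLen {n : ℕ} (z : Equiv.Perm (Fin n)) : ℕ :=
  (Finset.univ.filter
      (fun p : Fin n × Fin n => z p.2 < z p.1 ∧ z p.2 < p.1 ∧ p.1 < p.2)).card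

/-- The underlying function of `Θ = (1,2)(3,4)⋯(n-1,n)`. -/
def thetaFun (n : ℕ) (hn : n % 2 = 0) (i : Fin n) : Fin n :=
  ⟨if (i : ℕ) % 2 = 0 then (i : ℕ) + 1 else (i : ℕ) - 1, by
    have hi := i.isLt
    split_ifs with h <;> omega⟩

/-- The fixed-point-free involution `Θ = (1,2)(3,4)⋯(n-1,n)`. -/
def theta (n : ℕ) (hn : n % 2 = 0) : Equiv.Perm (Fin n) :=
  Function.Involutive.toPerm (thetaFun n hn) (by
    intro i
    have hi := i.isLt
    apply Fin.ext
    simp only [thetaFun]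
    split_ifs <;> omega)

/-- One step of the partial Hecke action: `heckeStep a z = some (z · s_{a+1})` when defined,
with `a` a 0-indexed letter (so `a` corresponds to the simple transposition of `a+1, a+2`
in 1-indexed notation). -/
def heckeStep {n : ℕ} (a : ℕ) (z : Equiv.Perm (Fin n)) : Option (Equiv.Perm (Fin n)) :=
  if h : a + 1 < n then
    let i : Fin n := ⟨a, Nat.lt_of_succ_lt h⟩
    let j : Fin n := ⟨a + 1, h⟩
    if z i < z j then some (Equiv.swap i j * z * Equiv.swap i j)
    else if z i = j ∧ z j = i then none
    else if z i ≠ j ∧ z j ≠ i ∧ z j < z i then some z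
    else none
  else none

/-- Apply a word of (0-indexed) letters to `z` via the partial Hecke action. -/
def heckeApply {n : ℕ} (l : List ℕ) (z : Equiv.Perm (Fin n)) :
    Option (Equiv.Perm (Fin n)) :=
  l.foldl (fun o a => o.bind (heckeStep a)) (some z)

/-- The simple transposition corresponding to the 0-indexed letter `a`. -/
def swapAt (n : ℕ) (a : ℕ) : Equiv.Perm (Fin n) :=
  if h : a + 1 < n then Equiv.swap ⟨a, Nat.lt_of_succ_lt h⟩ ⟨a + 1, h⟩ else 1

/-- The permutation `s_{i_1} s_{i_2} ⋯ s_{i_l}` of a word. -/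
def wordToPerm (n : ℕ) (l : List ℕ) : Equiv.Perm (Fin n) := (l.map (swapAt n)).prod

/-- `l` is a reduced word for `w`. -/
def IsReducedWord (n : ℕ) (w : Equiv.Perm (Fin n)) (l : List ℕ) : Prop :=
  (∀ a ∈ l, a + 1 < n) ∧ wordToPerm n l = w ∧ l.length = invLen w

/-- The set of Hecke atoms `B_fpf(z)`. -/
def Bfpf (n : ℕ) (hn : n % 2 = 0) (z : Equiv.Perm (Fin n)) :
    Finset (Equiv.Perm (Fin n)) :=
  @Finset.filter _
    (fun w => ∃ l : List ℕ, IsReducedWord n w l ∧ heckeApply l (theta n hn) = some z)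
    (Classical.decPred _) Finset.univ

/-- `extPerm z w` is the permutation `z × w` acting on the first `m` letters by `z`
and the last `n` letters by `w`. -/
def extPerm {m n : ℕ} (z : Equiv.Perm (Fin m)) (w : Equiv.Perm (Fin n)) :
    Equiv.Perm (Fin (m + n)) :=
  finSumFinEquiv.symm.trans ((Equiv.sumCongr z w).trans finSumFinEquiv)

/-- `rank(z_{[i][j]}) = #{k ∈ [j] : z(k) ≤ i}` (1-indexed sizes `i, j`). -/
def permRank {n : ℕ} (z : Equiv.Perm (Fin n)) (i j : ℕ) : ℕ :=
  (Finset.univ.filter (fun k : Fin n => (k : ℕ) < j ∧ ((z k : Fin n) : ℕ) < i)).card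

/-- The rank of the upper-left `i × j` corner of `A` (1-indexed sizes `i, j ≤ n`). -/
def cornerRank {n : ℕ} (A : Matrix (Fin n) (Fin n) ℂ) (i j : ℕ) : ℕ :=
  Matrix.rank (Matrix.of fun (a : Fin (min i n)) (b : Fin (min j n)) =>
    A ⟨(a : ℕ), lt_of_lt_of_le a.isLt (min_le_right i n)⟩
      ⟨(b : ℕ), lt_of_lt_of_le b.isLt (min_le_right j n)⟩)

/-- The orthogonal Rothe diagram `D^O(z) = {(i, z(j)) : z(i) > z(j) ≤ i < j}` (0-indexed). -/
def DO (n : ℕ) (z : Equiv.Perm (Fin n)) : Finset (Fin n × Fin n) :=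
  Finset.image (fun p : Fin n × Fin n => (p.1, z p.2))
    (Finset.univ.filter (fun p : Fin n × Fin n => z p.2 < z p.1 ∧ z p.2 ≤ p.1 ∧ p.1 < p.2))

/-- The symplectic Rothe diagram `D^Sp(z) = {(i, z(j)) : z(i) > z(j) < i < j}` (0-indexed). -/
def DSp (n : ℕ) (z : Equiv.Perm (Fin n)) : Finset (Fin n × Fin n) :=
  Finset.image (fun p : Fin n × Fin n => (p.1, z p.2))
    (Finset.univ.filter (fun p : Fin n × Fin n => z p.2 < z p.1 ∧ z p.2 < p.1 ∧ p.1 < p.2))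

/-- The essential set `Ess(D) = {(i,j) ∈ D : (i,j+1) ∉ D and (i+1,j) ∉ D}`. -/
def Ess {n : ℕ} (D : Finset (Fin n × Fin n)) : Finset (Fin n × Fin n) :=
  D.filter (fun p =>
    (∀ q ∈ D, ¬(q.1 = p.1 ∧ (q.2 : ℕ) = (p.2 : ℕ) + 1)) ∧
    (∀ q ∈ D, ¬((q.1 : ℕ) = (p.1 : ℕ) + 1 ∧ q.2 = p.2)))

/-- A permutation is vexillary if it avoids the pattern 2143. -/
def Vexillary {n : ℕ} (z : Equiv.Perm (Fin n)) : Prop :=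
  ¬ ∃ i j k l : Fin n, i < j ∧ j < k ∧ k < l ∧ z j < z i ∧ z i < z l ∧ z l < z k

/-- The ideal of `ℤ[x_1,…,x_N]` generated by symmetric polynomials with zero constant term. -/
def ILambda (N : ℕ) : Ideal (MvPolynomial (Fin N) ℤ) :=
  Ideal.span {f : MvPolynomial (Fin N) ℤ |
    (∀ σ : Equiv.Perm (Fin N), rename (⇑σ) f = f) ∧ coeff 0 f = 0}

/-- Substitute `x_j = 0` for all `j > n`, producing a polynomial in `x_1,…,x_n`. -/
def truncVars (n N : ℕ) (f : MvPolynomial (Fin N) Rb) : MvPolynomial (Fin n) Rb :=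
  aeval (fun i : Fin N => if h : (i : ℕ) < n then X ⟨(i : ℕ), h⟩ else 0) f

/-- The order used to list the elements of a pipe-dream subset `S`:
rows weakly increasing, columns strictly decreasing within a row. -/
def rowOrder {n : ℕ} (p q : Fin n × Fin n) : Prop :=
  p.1 < q.1 ∨ (p.1 = q.1 ∧ q.2 < p.2)

/-- `δ(S)` is a symplectic Hecke word for `z` (with Hecke words computed from `Θ`);
here `L` is the listing of `S` in the order `rowOrder`, and `(a,b) ∈ S` (0-indexed)
contributes the 0-indexed letter `a + b`, i.e. the 1-indexed letter `(b+1)+(a+1)-1`. -/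
def DeltaHeckeWord (n : ℕ) (hn : n % 2 = 0) (z : Equiv.Perm (Fin n))
    (S : Finset (Fin n × Fin n)) : Prop :=
  ∃ L : List (Fin n × Fin n), L.toFinset = S ∧ L.Chain' rowOrder ∧
    heckeApply (L.map (fun p => (p.1 : ℕ) + (p.2 : ℕ))) (theta n hn) = some z



section AuxProofs

open Matrix Module Submodule LinearMap

lemma rank_submatrix_le' {a b a' b' : ℕ} (A : Matrix (Fin a) (Fin b) ℂ)
    (f : Fin a' → Fin a) (g : Fin b' → Fin b) :
    (A.submatrix f g).rank ≤ A.rank := by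
  have hE : A.submatrix f g =
      (Matrix.of fun (i : Fin a') (k : Fin a) => if k = f i then (1:ℂ) else 0) * A *
      (Matrix.of fun (k : Fin b) (j : Fin b') => if k = g j then (1:ℂ) else 0) := by
    ext i j
    simp [Matrix.mul_apply, Finset.sum_ite_eq', Finset.sum_ite_eq]
  rw [hE]
  exact le_trans (Matrix.rank_mul_le_left _ _) (Matrix.rank_mul_le_right _ _)

lemma rank_neg' {a b : ℕ} (M : Matrix (Fin a) (Fin b) ℂ) : (-M).rank = M.rank := by
  have h : -M = M * (-1 : Matrix (Fin b) (Fin b) ℂ) := by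
    rw [Matrix.mul_neg, Matrix.mul_one]
  rw [h]
  apply Matrix.rank_mul_eq_left_of_isUnit_det
  rw [Matrix.det_neg, Matrix.det_one, mul_one]
  exact (isUnit_iff_ne_zero).2 (pow_ne_zero _ (by norm_num))

lemma rank_le_sub_col {p q q' : ℕ} (M : Matrix (Fin p) (Fin q) ℂ)
    (h : q' ≤ q) (h2 : q ≤ q' + 1) :
    M.rank ≤ (M.submatrix _root_.id (Fin.castLE h)).rank + 1 := by
  rcases Nat.lt_or_ge q' q with hlt | hge
  · obtain rfl : q = q' + 1 := by omega
    rw [Matrix.rank_eq_finrank_span_cols, Matrix.rank_eq_finrank_span_cols]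
    change finrank ℂ (span ℂ (Set.range Mᵀ)) ≤ finrank ℂ (span ℂ (Set.range (M.submatrix _root_.id (Fin.castLE h))ᵀ)) + 1
    have hsub : ∀ c, (M.submatrix _root_.id (Fin.castLE h))ᵀ c = Mᵀ (Fin.castLE h c) := by
      intro c; rfl
    have hle : span ℂ (Set.range Mᵀ) ≤
        span ℂ (Set.range (M.submatrix _root_.id (Fin.castLE h))ᵀ) ⊔ span ℂ {Mᵀ (Fin.last q')} := by
      rw [span_le]
      rintro - ⟨c, rfl⟩
      rcases Fin.eq_castSucc_or_eq_last c with ⟨c', rfl⟩ | rfl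
      · apply Submodule.mem_sup_left
        apply subset_span
        refine ⟨c', ?_⟩
        rw [hsub c']
        congr 1
      · exact Submodule.mem_sup_right (subset_span rfl)
    have h1 := Submodule.finrank_mono hle
    have h2' := Submodule.finrank_sup_add_finrank_inf_eq
      (span ℂ (Set.range (M.submatrix _root_.id (Fin.castLE h))ᵀ)) (span ℂ {Mᵀ (Fin.last q')})
    have h3 : finrank ℂ (span ℂ ({Mᵀ (Fin.last q')} : Set (Fin p → ℂ))) ≤ 1 := by
      by_cases hv : Mᵀ (Fin.last q') = 0
      · rw [hv, Submodule.span_zero_singleton]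
        simp
      · rw [finrank_span_singleton hv]
    omega
  · have hq : q = q' := by omega
    subst hq
    have : M.submatrix _root_.id (Fin.castLE h) = M := by
      ext i j; simp [Fin.castLE]
    rw [this]
    omega

lemma even_finrank_of_alt_nondeg :
    ∀ (k : ℕ) (V : Type) [AddCommGroup V] [Module ℂ V] [FiniteDimensional ℂ V]
      (B : LinearMap.BilinForm ℂ V),
      Module.finrank ℂ V = k → B.IsAlt → B.Nondegenerate → Even k := by
  intro k
  induction k using Nat.strong_induction_on with
  | _ k ih =>
    intro V _ _ _ B hdim halt hnd
    rcases Nat.eq_zero_or_pos k with rfl | hk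
    · exact Even.zero
    · -- pick x ≠ 0
      have : Nontrivial V := Module.nontrivial_of_finrank_pos (R := ℂ) (by omega)
      obtain ⟨x, hx⟩ := exists_ne (0 : V)
      have hxy : ∃ y, B x y ≠ 0 := by
        by_contra hcon
        push_neg at hcon
        exact hx (hnd.1 x hcon)
      obtain ⟨y, hBxy⟩ := hxy
      have hy0 : y ≠ 0 := by rintro rfl; simp at hBxy
      have hyx : B y x = -B x y := (halt.neg_eq x y).symm
      -- x, y linearly independent
      have hli : LinearIndependent ℂ ![x, y] := by
        rw [LinearIndependent.pair_iff]
        intro s t hst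
        have h1 : B (s • x + t • y) y = 0 := by rw [hst]; simp
        have h2 : B (s • x + t • y) x = 0 := by rw [hst]; simp
        simp only [map_add, _root_.map_smul, LinearMap.add_apply, LinearMap.smul_apply,
          smul_eq_mul] at h1 h2
        rw [halt y] at h1
        rw [halt x, hyx] at h2
        have hs : s = 0 := by
          have := h1
          rw [mul_zero, add_zero] at this
          exact (mul_eq_zero.1 this).resolve_right hBxy
        refine ⟨hs, ?_⟩
        rw [hs] at h2
        simp at h2
        rcases h2 with h2 | h2
        · exact h2
        · exact absurd h2 hBxy
      set U : Submodule ℂ V := span ℂ {x, y} with hU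
      have hUrank : finrank ℂ U = 2 := by
        have : ({x, y} : Set V) = Set.range ![x, y] := by
          simp [Set.range_subset_iff]
          ext v
          simp [Matrix.range_cons, Matrix.range_empty]
          tauto
        rw [hU, this, finrank_span_eq_card hli]
        simp
      have hxU : x ∈ U := subset_span (by simp)
      have hyU : y ∈ U := subset_span (by simp)
      -- restriction to U nondegenerate
      have hres : (B.restrict U).Nondegenerate := by
        refine (LinearMap.IsRefl.nondegenerate_iff_separatingLeft (B := B.restrict U) (fun a b hab => halt.isRefl a b hab)).2 ?_
        rintro ⟨v, hv⟩ hv0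
        obtain ⟨a, b, hab⟩ := Submodule.mem_span_pair.1 hv
        have h1 : B v x = 0 := hv0 ⟨x, hxU⟩
        have h2 : B v y = 0 := hv0 ⟨y, hyU⟩
        rw [← hab] at h1 h2
        simp only [map_add, _root_.map_smul, LinearMap.add_apply, LinearMap.smul_apply,
          smul_eq_mul] at h1 h2
        rw [halt x, hyx] at h1
        rw [halt y] at h2
        have hb : b = 0 := by
          rw [mul_zero, zero_add] at h1
          rcases mul_eq_zero.1 h1 with h | h
          · exact h
          · exact absurd (neg_eq_zero.1 h) hBxy
        have ha : a = 0 := by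
          rw [mul_zero, add_zero] at h2
          exact (mul_eq_zero.1 h2).resolve_right hBxy
        apply Subtype.ext
        simp only
        rw [← hab, ha, hb]
        simp
      have hrefl : B.IsRefl := halt.isRefl
      have hcompl : IsCompl U (B.orthogonal U) :=
        LinearMap.BilinForm.isCompl_orthogonal_of_restrict_nondegenerate hrefl hres
      set W := B.orthogonal U with hW
      have hWrank : finrank ℂ W = k - 2 := by
        have := Submodule.finrank_add_eq_of_isCompl hcompl
        omega
      -- restriction to W nondegenerate
      have horth : B.orthogonal W = U :=
        LinearMap.BilinForm.orthogonal_orthogonal hnd hrefl U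
      have hresW : (B.restrict W).Nondegenerate := by
        apply LinearMap.BilinForm.nondegenerate_restrict_of_disjoint_orthogonal B hrefl
        rw [horth]
        exact hcompl.disjoint.symm
      have haltW : (B.restrict W).IsAlt := fun w => halt w
      have hksub : Even (k - 2) := ih (k - 2) (by omega) W (B.restrict W) hWrank haltW hresW
      have hk2 : 2 ≤ k := by
        have := hUrank ▸ Submodule.finrank_le U
        omega
      obtain ⟨m, hm⟩ := hksub
      exact ⟨m + 1, by omega⟩

lemma rank_even_of_skew {m : ℕ} (A : Matrix (Fin m) (Fin m) ℂ) (h : Aᵀ = -A) :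
    Even A.rank := by
  set B := Matrix.toBilin' A with hB
  have hBapp : ∀ x y, B x y = x ⬝ᵥ A.mulVec y := fun x y => Matrix.toBilin'_apply' A x y
  have hskew : ∀ x y, B x y = - B y x := by
    intro x y
    rw [hBapp, hBapp, Matrix.dotProduct_mulVec, ← Matrix.mulVec_transpose, h,
      Matrix.neg_mulVec, neg_dotProduct, dotProduct_comm]
  have halt : B.IsAlt := by
    intro x
    have hx := hskew x x
    linear_combination (1/2 : ℂ) * hx
  -- kernel submodule
  set K : Submodule ℂ (Fin m → ℂ) := LinearMap.ker A.mulVecLin with hK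
  obtain ⟨W, hWc⟩ := Submodule.exists_isCompl K
  have hBK : ∀ v w, w ∈ K → B v w = 0 := by
    intro v w hw
    rw [hBapp]
    have : A.mulVec w = 0 := hw
    rw [this, dotProduct_zero]
  have hBK' : ∀ v w, w ∈ K → B w v = 0 := by
    intro v w hw
    rw [hskew, hBK v w hw, neg_zero]
  have hresW : (B.restrict W).Nondegenerate := by
    refine (LinearMap.IsRefl.nondegenerate_iff_separatingLeft (B := B.restrict W) (fun a b hab => halt.isRefl a b hab)).2 ?_
    rintro ⟨w, hw⟩ h0
    have hall : ∀ v, B v w = 0 := by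
      intro v
      have hv : v ∈ K ⊔ W := by rw [hWc.sup_eq_top]; exact Submodule.mem_top
      obtain ⟨kv, hkv, wv, hwv, rfl⟩ := Submodule.mem_sup.1 hv
      have h1 : B kv w = 0 := hBK' w kv hkv
      have h2 : B wv w = 0 := by
        rw [hskew, show B w wv = 0 from h0 ⟨wv, hwv⟩, neg_zero]
      rw [map_add, LinearMap.add_apply, h1, h2, add_zero]
    have hwK : w ∈ K := by
      show A.mulVec w = 0
      funext i
      have := hall (Pi.single i 1)
      rw [hBapp] at this
      rwa [single_dotProduct, one_mul] at this
    have : w ∈ K ⊓ W := ⟨hwK, hw⟩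
    rw [hWc.inf_eq_bot] at this
    exact Subtype.ext this
  have haltW : (B.restrict W).IsAlt := fun w => halt w
  have hWrank : finrank ℂ W = A.rank := by
    have h1 := Submodule.finrank_add_eq_of_isCompl hWc
    have h2 := LinearMap.finrank_range_add_finrank_ker A.mulVecLin
    rw [← hK] at h2
    have h3 : finrank ℂ (Fin m → ℂ) = m := by simp
    rw [Matrix.rank]
    omega
  exact even_finrank_of_alt_nondeg A.rank W (B.restrict W) hWrank haltW hresW

def cMat {n : ℕ} (A : Matrix (Fin n) (Fin n) ℂ) (i j : ℕ) :
    Matrix (Fin (min i n)) (Fin (min j n)) ℂ :=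
  Matrix.of fun a b =>
    A ⟨(a : ℕ), lt_of_lt_of_le a.isLt (min_le_right i n)⟩
      ⟨(b : ℕ), lt_of_lt_of_le b.isLt (min_le_right j n)⟩

lemma cornerRank_eq {n : ℕ} (A : Matrix (Fin n) (Fin n) ℂ) (i j : ℕ) :
    cornerRank A i j = (cMat A i j).rank := rfl

lemma cornerRank_le_width {n : ℕ} (A : Matrix (Fin n) (Fin n) ℂ) (i j : ℕ) :
    cornerRank A i j ≤ j := by
  rw [cornerRank_eq]
  refine le_trans (Matrix.rank_le_card_width _) ?_
  simp [Fintype.card_fin]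

lemma cornerRank_mono {n : ℕ} (A : Matrix (Fin n) (Fin n) ℂ) {i j i' j' : ℕ}
    (hi : i ≤ i') (hj : j ≤ j') : cornerRank A i j ≤ cornerRank A i' j' := by
  rw [cornerRank_eq, cornerRank_eq]
  have h1 : min i n ≤ min i' n := by omega
  have h2 : min j n ≤ min j' n := by omega
  have heq : cMat A i j = (cMat A i' j').submatrix (Fin.castLE h1) (Fin.castLE h2) := by
    ext a b; rfl
  rw [heq]
  exact rank_submatrix_le' _ _ _

lemma cMat_transpose {n : ℕ} (A : Matrix (Fin n) (Fin n) ℂ) (i j : ℕ) :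
    cMat Aᵀ j i = (cMat A i j)ᵀ := by
  ext a b; rfl

lemma cornerRank_transpose {n : ℕ} (A : Matrix (Fin n) (Fin n) ℂ) (i j : ℕ) :
    cornerRank Aᵀ j i = cornerRank A i j := by
  rw [cornerRank_eq, cornerRank_eq, cMat_transpose, Matrix.rank_transpose]

lemma cornerRank_col_succ {n : ℕ} (A : Matrix (Fin n) (Fin n) ℂ) (i j : ℕ) :
    cornerRank A i (j + 1) ≤ cornerRank A i j + 1 := by
  rw [cornerRank_eq, cornerRank_eq]
  have h : min j n ≤ min (j+1) n := by omega
  have h2 : min (j+1) n ≤ min j n + 1 := by omega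
  have heq : (cMat A i (j+1)).submatrix _root_.id (Fin.castLE h) = cMat A i j := by
    ext a b; rfl
  have := rank_le_sub_col (cMat A i (j+1)) h h2
  rwa [heq] at this

lemma cornerRank_row_succ {n : ℕ} (A : Matrix (Fin n) (Fin n) ℂ) (i j : ℕ) :
    cornerRank A (i + 1) j ≤ cornerRank A i j + 1 := by
  rw [← cornerRank_transpose A (i+1) j, ← cornerRank_transpose A i j]
  exact cornerRank_col_succ Aᵀ j i

lemma cornerRank_swap {n : ℕ} (A : Matrix (Fin n) (Fin n) ℂ) (hA : Aᵀ = -A) (i j : ℕ) :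
    cornerRank A i j = cornerRank A j i := by
  rw [← cornerRank_transpose A i j, cornerRank_eq, cornerRank_eq]
  have heq : cMat Aᵀ j i = -(cMat A j i) := by
    ext a b
    show Aᵀ _ _ = -(A _ _)
    rw [hA]
    rfl
  rw [heq, rank_neg']

lemma cornerRank_diag_even {n : ℕ} (A : Matrix (Fin n) (Fin n) ℂ) (hA : Aᵀ = -A) (i : ℕ) :
    Even (cornerRank A i i) := by
  rw [cornerRank_eq]
  apply rank_even_of_skew
  ext a b
  have hb : (b : ℕ) < n := lt_of_lt_of_le b.isLt (min_le_right i n)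
  have ha : (a : ℕ) < n := lt_of_lt_of_le a.isLt (min_le_right i n)
  show A ⟨(b : ℕ), hb⟩ ⟨(a : ℕ), ha⟩ = -(A ⟨(a : ℕ), ha⟩ ⟨(b : ℕ), hb⟩)
  have := congrFun (congrFun hA ⟨(a : ℕ), ha⟩) ⟨(b : ℕ), hb⟩
  rw [Matrix.transpose_apply] at this
  exact this.trans rfl

lemma permRank_zero {n : ℕ} (z : Equiv.Perm (Fin n)) (i : ℕ) : permRank z i 0 = 0 := by
  rw [permRank, Finset.card_eq_zero, Finset.filter_eq_empty_iff]
  intro k _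
  simp

lemma permRank_succ_col {n : ℕ} (z : Equiv.Perm (Fin n)) (i : ℕ) (c : Fin n) :
    permRank z i ((c : ℕ) + 1) =
      permRank z i (c : ℕ) + (if ((z c : Fin n) : ℕ) < i then 1 else 0) := by
  by_cases hc : ((z c : Fin n) : ℕ) < i
  · have heq : Finset.univ.filter (fun k : Fin n => (k : ℕ) < (c : ℕ) + 1 ∧ ((z k : Fin n) : ℕ) < i)
        = insert c (Finset.univ.filter (fun k : Fin n => (k : ℕ) < (c : ℕ) ∧ ((z k : Fin n) : ℕ) < i)) := by
      ext k
      simp only [Finset.mem_filter, Finset.mem_insert, Finset.mem_univ, true_and]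
      constructor
      · rintro ⟨hk1, hk2⟩
        rcases Nat.lt_succ_iff_lt_or_eq.1 hk1 with h | h
        · exact Or.inr ⟨h, hk2⟩
        · exact Or.inl (Fin.ext h)
      · rintro (rfl | ⟨hk1, hk2⟩)
        · exact ⟨Nat.lt_succ_self _, hc⟩
        · exact ⟨by omega, hk2⟩
    rw [permRank, permRank, heq, Finset.card_insert_of_notMem (by simp), if_pos hc]
  · have heq : Finset.univ.filter (fun k : Fin n => (k : ℕ) < (c : ℕ) + 1 ∧ ((z k : Fin n) : ℕ) < i)
        = Finset.univ.filter (fun k : Fin n => (k : ℕ) < (c : ℕ) ∧ ((z k : Fin n) : ℕ) < i) := by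
      ext k
      simp only [Finset.mem_filter, Finset.mem_univ, true_and]
      constructor
      · rintro ⟨hk1, hk2⟩
        refine ⟨?_, hk2⟩
        rcases Nat.lt_succ_iff_lt_or_eq.1 hk1 with h | h
        · exact h
        · exact absurd (Fin.ext h ▸ hk2) hc
      · rintro ⟨hk1, hk2⟩
        exact ⟨by omega, hk2⟩
    rw [permRank, permRank, heq, if_neg hc, add_zero]

lemma permRank_succ_row {n : ℕ} (z : Equiv.Perm (Fin n)) (hzz : ∀ x, z (z x) = x)
    (r : Fin n) (j : ℕ) :
    permRank z ((r : ℕ) + 1) j =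
      permRank z (r : ℕ) j + (if ((z r : Fin n) : ℕ) < j then 1 else 0) := by
  by_cases hr : ((z r : Fin n) : ℕ) < j
  · have heq : Finset.univ.filter (fun k : Fin n => (k : ℕ) < j ∧ ((z k : Fin n) : ℕ) < (r : ℕ) + 1)
        = insert (z r) (Finset.univ.filter (fun k : Fin n => (k : ℕ) < j ∧ ((z k : Fin n) : ℕ) < (r : ℕ))) := by
      ext k
      simp only [Finset.mem_filter, Finset.mem_insert, Finset.mem_univ, true_and]
      constructor
      · rintro ⟨hk1, hk2⟩
        rcases Nat.lt_succ_iff_lt_or_eq.1 hk2 with h | h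
        · exact Or.inr ⟨hk1, h⟩
        · refine Or.inl ?_
          have : z k = r := Fin.ext h
          rw [← this, hzz]
      · rintro (rfl | ⟨hk1, hk2⟩)
        · exact ⟨hr, by rw [hzz]; omega⟩
        · exact ⟨hk1, by omega⟩
    rw [permRank, permRank, heq, Finset.card_insert_of_notMem (by simp [hzz]), if_pos hr]
  · have heq : Finset.univ.filter (fun k : Fin n => (k : ℕ) < j ∧ ((z k : Fin n) : ℕ) < (r : ℕ) + 1)
        = Finset.univ.filter (fun k : Fin n => (k : ℕ) < j ∧ ((z k : Fin n) : ℕ) < (r : ℕ)) := by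
      ext k
      simp only [Finset.mem_filter, Finset.mem_univ, true_and]
      constructor
      · rintro ⟨hk1, hk2⟩
        refine ⟨hk1, ?_⟩
        rcases Nat.lt_succ_iff_lt_or_eq.1 hk2 with h | h
        · exact h
        · exfalso
          have : z k = r := Fin.ext h
          have hkzr : k = z r := by rw [← this, hzz]
          rw [hkzr] at hk1
          exact hr hk1
      · rintro ⟨hk1, hk2⟩
        exact ⟨hk1, by omega⟩
    rw [permRank, permRank, heq, if_neg hr, add_zero]

lemma permRank_symm {n : ℕ} (z : Equiv.Perm (Fin n)) (hzz : ∀ x, z (z x) = x) (i j : ℕ) :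
    permRank z i j = permRank z j i := by
  rw [permRank, permRank]
  apply Finset.card_bij (fun k _ => z k)
  · intro k hk
    simp only [Finset.mem_filter, Finset.mem_univ, true_and] at hk ⊢
    exact ⟨hk.2, by rw [hzz]; exact hk.1⟩
  · intro k₁ _ k₂ _ h
    exact z.injective h
  · intro k hk
    simp only [Finset.mem_filter, Finset.mem_univ, true_and] at hk
    refine ⟨z k, ?_, hzz k⟩
    simp only [Finset.mem_filter, Finset.mem_univ, true_and, hzz]
    exact ⟨hk.2, hk.1⟩

lemma permRank_top {n : ℕ} (z : Equiv.Perm (Fin n)) {j : ℕ} (hj : j ≤ n) :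
    permRank z n j = j := by
  induction j with
  | zero => exact permRank_zero z n
  | succ j ih =>
    have hjn : j < n := by omega
    have := permRank_succ_col z n ⟨j, hjn⟩
    simp only [Fin.isLt, if_pos] at this
    rw [this, ih (by omega)]

lemma permRank_diag_even {n : ℕ} (z : Equiv.Perm (Fin n)) (hzz : ∀ x, z (z x) = x)
    (hne : ∀ x, z x ≠ x) (i : ℕ) : Even (permRank z i i) := by
  classical
  set S := Finset.univ.filter (fun k : Fin n => (k : ℕ) < i ∧ ((z k : Fin n) : ℕ) < i) with hS
  have hmemS : ∀ k, k ∈ S ↔ ((k : ℕ) < i ∧ ((z k : Fin n) : ℕ) < i) := by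
    intro k; simp [hS]
  have hzS : ∀ k, k ∈ S → z k ∈ S := by
    intro k hk
    rw [hmemS] at hk ⊢
    rw [hzz]
    exact ⟨hk.2, hk.1⟩
  have hsum := Finset.card_filter_add_card_filter_not
    (s := S) (p := fun k : Fin n => k < z k)
  have hbij : (S.filter (fun k => k < z k)).card = (S.filter (fun k => ¬ k < z k)).card := by
    apply Finset.card_bij (fun k _ => z k)
    · intro k hk
      simp only [Finset.mem_filter] at hk ⊢
      refine ⟨hzS k hk.1, ?_⟩
      rw [hzz]
      omega
    · intro k₁ _ k₂ _ h
      exact z.injective h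
    · intro k hk
      simp only [Finset.mem_filter] at hk
      refine ⟨z k, ?_, hzz k⟩
      simp only [Finset.mem_filter]
      refine ⟨hzS k hk.1, ?_⟩
      rw [hzz]
      have := hne k
      rcases lt_or_gt_of_ne (hne k) with h | h
      · exact h
      · exact absurd h hk.2
  rw [permRank, ← hS, ← hsum, ← hbij]
  exact ⟨_, rfl⟩

lemma mem_DSp {n : ℕ} (z : Equiv.Perm (Fin n)) (hzz : ∀ x, z (z x) = x) (a b : Fin n) :
    (a, b) ∈ DSp n z ↔ (b < z a ∧ b < a ∧ a < z b) := by
  simp only [DSp, Finset.mem_image, Finset.mem_filter, Finset.mem_univ, true_and]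
  constructor
  · rintro ⟨⟨p1, p2⟩, ⟨h1, h2, h3⟩, heq⟩
    rw [Prod.mk.injEq] at heq
    obtain ⟨rfl, rfl⟩ := heq
    exact ⟨h1, h2, by rwa [hzz]⟩
  · rintro ⟨h1, h2, h3⟩
    refine ⟨(a, z b), ⟨?_, ?_, h3⟩, ?_⟩
    · rwa [hzz]
    · rwa [hzz]
    · rw [hzz]

lemma not_ess {n : ℕ} {z : Equiv.Perm (Fin n)} {p : Fin n × Fin n}
    (hmem : p ∈ DSp n z) (hness : p ∉ Ess (DSp n z)) :
    (∃ q ∈ DSp n z, q.1 = p.1 ∧ (q.2 : ℕ) = (p.2 : ℕ) + 1) ∨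
    (∃ q ∈ DSp n z, (q.1 : ℕ) = (p.1 : ℕ) + 1 ∧ q.2 = p.2) := by
  rw [Ess, Finset.mem_filter] at hness
  have h : ¬((∀ q ∈ DSp n z, ¬(q.1 = p.1 ∧ (q.2 : ℕ) = (p.2 : ℕ) + 1)) ∧
      (∀ q ∈ DSp n z, ¬((q.1 : ℕ) = (p.1 : ℕ) + 1 ∧ q.2 = p.2))) :=
    fun hc => hness ⟨hmem, hc⟩
  rcases Decidable.em (∀ q ∈ DSp n z, ¬(q.1 = p.1 ∧ (q.2 : ℕ) = (p.2 : ℕ) + 1)) with h1 | h1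
  · right
    have h2 : ¬(∀ q ∈ DSp n z, ¬((q.1 : ℕ) = (p.1 : ℕ) + 1 ∧ q.2 = p.2)) :=
      fun hc => h ⟨h1, hc⟩
    push_neg at h2
    obtain ⟨q, hq, hq2⟩ := h2
    exact ⟨q, hq, hq2⟩
  · left
    push_neg at h1
    obtain ⟨q, hq, hq2⟩ := h1
    exact ⟨q, hq, hq2⟩

lemma key1 {n : ℕ} (z : Equiv.Perm (Fin n)) (hzz : ∀ x, z (z x) = x)
    (A : Matrix (Fin n) (Fin n) ℂ)
    (H : ∀ p ∈ Ess (DSp n z),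
      cornerRank A ((p.1 : ℕ) + 1) ((p.2 : ℕ) + 1) ≤ permRank z ((p.1 : ℕ) + 1) ((p.2 : ℕ) + 1)) :
    ∀ (d : ℕ) (a b : Fin n), 2*n - ((a : ℕ) + (b : ℕ)) ≤ d → (a, b) ∈ DSp n z →
      cornerRank A ((a : ℕ) + 1) ((b : ℕ) + 1) ≤ permRank z ((a : ℕ) + 1) ((b : ℕ) + 1) := by
  intro d
  induction d with
  | zero =>
    intro a b hd _
    exfalso
    have := a.isLt
    have := b.isLt
    omega
  | succ d ih =>
    intro a b hd hmem
    by_cases hess : (a, b) ∈ Ess (DSp n z)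
    · exact H (a, b) hess
    · rcases not_ess hmem hess with ⟨⟨q1, q2⟩, hq, hq1, hq2⟩ | ⟨⟨q1, q2⟩, hq, hq1, hq2⟩
    -- column neighbor (a, b+1) ∈ DSp
      · simp only at hq1 hq2
        rw [hq1] at hq
        have hmem2 : (a, q2) ∈ DSp n z := hq
        have hstep : cornerRank A ((a : ℕ) + 1) ((b : ℕ) + 1) ≤
            cornerRank A ((a : ℕ) + 1) ((q2 : ℕ) + 1) := cornerRank_mono A le_rfl (by omega)
        have hih := ih a q2 (by omega) hmem2
        have hcol := permRank_succ_col z ((a : ℕ) + 1) q2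
        have hzq : ¬ ((z q2 : Fin n) : ℕ) < (a : ℕ) + 1 := by
          have := ((mem_DSp z hzz a q2).1 hmem2).2.2
          have : (a : ℕ) < ((z q2 : Fin n) : ℕ) := this
          omega
        rw [if_neg hzq, add_zero] at hcol
        rw [hq2] at hcol hstep hih
        omega
      -- row neighbor (a+1, b) ∈ DSp
      · simp only at hq1 hq2
        rw [hq2] at hq
        have hmem2 : (q1, b) ∈ DSp n z := hq
        have hstep : cornerRank A ((a : ℕ) + 1) ((b : ℕ) + 1) ≤
            cornerRank A ((q1 : ℕ) + 1) ((b : ℕ) + 1) := cornerRank_mono A (by omega) le_rfl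
        have hih := ih q1 b (by omega) hmem2
        have hrow := permRank_succ_row z hzz q1 ((b : ℕ) + 1)
        have hzq : ¬ ((z q1 : Fin n) : ℕ) < (b : ℕ) + 1 := by
          have := ((mem_DSp z hzz q1 b).1 hmem2).1
          have : (b : ℕ) < ((z q1 : Fin n) : ℕ) := this
          omega
        rw [if_neg hzq, add_zero] at hrow
        rw [hq1] at hrow hstep hih
        omega

lemma key2 {n : ℕ} (z : Equiv.Perm (Fin n)) (hzz : ∀ x, z (z x) = x) (hne : ∀ x, z x ≠ x)
    (A : Matrix (Fin n) (Fin n) ℂ) (hA : Aᵀ = -A)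
    (H : ∀ p ∈ Ess (DSp n z),
      cornerRank A ((p.1 : ℕ) + 1) ((p.2 : ℕ) + 1) ≤ permRank z ((p.1 : ℕ) + 1) ((p.2 : ℕ) + 1)) :
    ∀ (s i j : ℕ), j ≤ i → i ≤ n → i + j ≤ s → cornerRank A i j ≤ permRank z i j := by
  intro s
  induction s with
  | zero =>
    intro i j hji hin hs
    have h0 : j = 0 := by omega
    subst h0
    have := cornerRank_le_width A i 0
    omega
  | succ s ih =>
    intro i j hji hin hs
    rcases Nat.eq_zero_or_pos j with rfl | hj
    · have := cornerRank_le_width A i 0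
      omega
    rcases Nat.lt_or_ge i n with hin | hin'
    · -- i < n, 1 ≤ j ≤ i
      set aF : Fin n := ⟨i - 1, by omega⟩ with haF
      set bF : Fin n := ⟨j - 1, by omega⟩ with hbF
      have hav : (aF : ℕ) = i - 1 := rfl
      have hbv : (bF : ℕ) = j - 1 := rfl
      by_cases h1 : ((z bF : Fin n) : ℕ) < i
      · -- column reduction
        have hcol := permRank_succ_col z i bF
        rw [if_pos h1, hbv] at hcol
        have hj1 : j - 1 + 1 = j := by omega
        rw [hj1] at hcol
        have hih := ih i (j - 1) (by omega) (by omega) (by omega)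
        have hR := cornerRank_col_succ A i (j - 1)
        rw [hj1] at hR
        omega
      by_cases h2 : ((z aF : Fin n) : ℕ) < j
      · -- row reduction
        have hrow := permRank_succ_row z hzz aF j
        rw [if_pos h2, hav] at hrow
        have hi1 : i - 1 + 1 = i := by omega
        rw [hi1] at hrow
        have hR := cornerRank_row_succ A (i - 1) j
        rw [hi1] at hR
        have hP : cornerRank A (i - 1) j ≤ permRank z (i - 1) j := by
          rcases Nat.lt_or_ge (i - 1) j with hlt | hge
          · -- j = i, use symmetry
            have hji' : j = i := by omega
            subst hji'
            have hsym1 := cornerRank_swap A hA (j - 1) j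
            have hsym2 := permRank_symm z hzz (j - 1) j
            have := ih j (j - 1) (by omega) (by omega) (by omega)
            omega
          · exact ih (i - 1) j (by omega) (by omega) (by omega)
        omega
      · -- z bF ≥ i, z aF ≥ j
        push_neg at h1 h2
        rcases Nat.lt_or_ge j i with hlt | hge
        · -- strictly below diagonal: (aF, bF) ∈ DSp
          have hmem : (aF, bF) ∈ DSp n z := by
            rw [mem_DSp z hzz]
            refine ⟨?_, ?_, ?_⟩
            · rw [Fin.lt_def]
              omega
            · rw [Fin.lt_def]
              omega
            · rw [Fin.lt_def]
              omega
          have := key1 z hzz A H (2*n) aF bF (by omega) hmem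
          rw [hav, hbv] at this
          have hi1 : i - 1 + 1 = i := by omega
          have hj1 : j - 1 + 1 = j := by omega
          rw [hi1, hj1] at this
          exact this
        · -- diagonal: j = i
          have hji' : j = i := by omega
          subst hji'
          have hcol := permRank_succ_col z j bF
          rw [if_neg (by omega), add_zero, hbv] at hcol
          have hj1 : j - 1 + 1 = j := by omega
          rw [hj1] at hcol
          have hR := cornerRank_col_succ A j (j - 1)
          rw [hj1] at hR
          have hih := ih j (j - 1) (by omega) (by omega) (by omega)
          have hevR := cornerRank_diag_even A hA j
          have hevr := permRank_diag_even z hzz hne j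
          obtain ⟨u, hu⟩ := hevR
          obtain ⟨v, hv⟩ := hevr
          omega
    · -- i = n
      have hin2 : i = n := by omega
      rw [hin2]
      have := cornerRank_le_width A n j
      rw [permRank_top z (show j ≤ n by omega)]
      omega


end AuxProofs

theorem statement11 (n : ℕ) (hpos : 0 < n) (hev : n % 2 = 0)
    (z : Equiv.Perm (Fin n)) (hz : IsFPF z)
    (A : Matrix (Fin n) (Fin n) ℂ) (hA : A.transpose = -A) :
    (∀ i j : ℕ, i ≤ n → j ≤ n → cornerRank A i j ≤ permRank z i j) ↔
      ∀ p ∈ Ess (DSp n z),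
        cornerRank A ((p.1 : ℕ) + 1) ((p.2 : ℕ) + 1) ≤
          permRank z ((p.1 : ℕ) + 1) ((p.2 : ℕ) + 1) := by
  obtain ⟨hzmul, hne⟩ := hz
  have hzz : ∀ x, z (z x) = x := fun x => by
    rw [← Equiv.Perm.mul_apply, hzmul, Equiv.Perm.one_apply]
  constructor
  · intro h p hp
    have h1 := p.1.isLt
    have h2 := p.2.isLt
    exact h _ _ (by omega) (by omega)
  · intro H i j hi hj
    rcases le_or_gt j i with hji | hij
    · exact key2 z hzz hne A hA H (i + j) i j hji hi le_rfl
    · rw [cornerRank_swap A hA i j, permRank_symm z hzz i j]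
      exact key2 z hzz hne A hA H (j + i) j i (le_of_lt hij) hj le_rfl

end
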